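/- For every λ > 0, every n ≥ 0 and every m ≥ 0, the consecutive-block sums s_n(m, λ) = ∑_{k=m}^{m+n} λ^k e^{-λ}/k! satisfy: s_n(m+1, λ) < s_n(m, λ) if and only if λ^{n+1} < (m+1)(m+2)⋯(m+n+1). -/

import Mathlib

lemma prod_Icc_factorial (m n : ℕ) :
    (Nat.factorial m : ℝ) * ∏ j ∈ Finset.Icc (m + 1) (m + n + 1), (j : ℝ)
      = (Nat.factorial (m + n + 1) : ℝ) := by
  induction n with
  | zero =>
      simp [Nat.factorial_succ, mul_comm]
  | succ n ih =>
      have h : m + 1 ≤ m + (n + 1) + 1 := by omega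
      rw [show m + (n + 1) + 1 = (m + n + 1) + 1 by ring,
        Finset.prod_Icc_succ_top (by omega : m + 1 ≤ m + n + 1 + 1), ← mul_assoc, ih,
        Nat.factorial_succ (m + n + 1)]
      push_cast
      ring

/-- For every `λ > 0`, `n ≥ 0` and `m ≥ 0`, with `s_n(m,λ) = ∑_{k=m}^{m+n} λ^k e^{-λ}/k!`,
one has `s_n(m+1,λ) < s_n(m,λ)` iff `λ^{n+1} < (m+1)(m+2)⋯(m+n+1)`. -/
theorem poisson_block_sum_decrease_iff (l : ℝ) (hl : 0 < l) (n m : ℕ) :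
    (∑ k ∈ Finset.Icc (m + 1) (m + 1 + n), l ^ k * Real.exp (-l) / (Nat.factorial k : ℝ))
        < ∑ k ∈ Finset.Icc m (m + n), l ^ k * Real.exp (-l) / (Nat.factorial k : ℝ)
      ↔ l ^ (n + 1) < ∏ j ∈ Finset.Icc (m + 1) (m + n + 1), (j : ℝ) := by
  set f : ℕ → ℝ := fun k => l ^ k * Real.exp (-l) / (Nat.factorial k : ℝ) with hf
  have key : ∑ k ∈ Finset.Icc (m + 1) (m + 1 + n), f k
      = (∑ k ∈ Finset.Icc m (m + n), f k) - f m + f (m + n + 1) := by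
    have h1 : ∑ k ∈ Finset.Icc m (m + n + 1), f k
        = (∑ k ∈ Finset.Icc m (m + n), f k) + f (m + n + 1) :=
      Finset.sum_Icc_succ_top (by omega) f
    have h2 : ∑ k ∈ Finset.Icc m (m + n + 1), f k
        = f m + ∑ k ∈ Finset.Icc (m + 1) (m + n + 1), f k := by
      rw [show Finset.Icc m (m + n + 1) = insert m (Finset.Icc (m + 1) (m + n + 1)) by
        ext x; simp [Finset.mem_Icc, Finset.mem_insert]; omega,
        Finset.sum_insert (by simp)]
    have : m + 1 + n = m + n + 1 := by ring
    rw [this]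
    linarith
  rw [key]
  have step1 : ((∑ k ∈ Finset.Icc m (m + n), f k) - f m + f (m + n + 1)
      < ∑ k ∈ Finset.Icc m (m + n), f k) ↔ f (m + n + 1) < f m := by
    constructor <;> intro h <;> linarith
  rw [step1]
  have he : (0:ℝ) < Real.exp (-l) := Real.exp_pos _
  have hF0 : (0:ℝ) < (Nat.factorial m : ℝ) := by positivity
  have hF1 : (0:ℝ) < (Nat.factorial (m + n + 1) : ℝ) := by positivity
  have hlm : (0:ℝ) < l ^ m := by positivity
  rw [hf]
  simp only []
  rw [div_lt_div_iff₀ hF1 hF0]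
  have hprod := prod_Icc_factorial m n
  constructor
  · intro h
    have h' : l ^ (m + n + 1) * (Nat.factorial m : ℝ) < l ^ m * (Nat.factorial (m + n + 1) : ℝ) := by
      have := mul_lt_mul_of_pos_right h (by positivity : (0:ℝ) < (Real.exp (-l))⁻¹)
      calc l ^ (m + n + 1) * (Nat.factorial m : ℝ)
          = l ^ (m + n + 1) * Real.exp (-l) * (Nat.factorial m : ℝ) * (Real.exp (-l))⁻¹ := by
            field_simp
        _ < l ^ m * Real.exp (-l) * (Nat.factorial (m + n + 1) : ℝ) * (Real.exp (-l))⁻¹ := this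
        _ = l ^ m * (Nat.factorial (m + n + 1) : ℝ) := by field_simp
    rw [pow_add, pow_add, pow_one] at h'
    have h'' : l ^ n * l * (Nat.factorial m : ℝ) < (Nat.factorial (m + n + 1) : ℝ) := by
      have := (mul_lt_mul_iff_right₀ hlm).mp (by linarith [h'] : l ^ m * (l ^ n * l * (Nat.factorial m : ℝ)) < l ^ m * (Nat.factorial (m + n + 1) : ℝ))
      exact this
    rw [← hprod] at h''
    have := (mul_lt_mul_iff_right₀ hF0).mp (by linarith : (Nat.factorial m : ℝ) * (l ^ n * l) < (Nat.factorial m : ℝ) * ∏ j ∈ Finset.Icc (m + 1) (m + n + 1), (j : ℝ))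
    calc l ^ (n + 1) = l ^ n * l := by rw [pow_succ]
      _ < _ := this
  · intro h
    have h' : (Nat.factorial m : ℝ) * l ^ (n + 1) < (Nat.factorial (m + n + 1) : ℝ) := by
      rw [← hprod]
      exact (mul_lt_mul_iff_right₀ hF0).mpr h
    have h'' : l ^ m * ((Nat.factorial m : ℝ) * l ^ (n + 1)) < l ^ m * (Nat.factorial (m + n + 1) : ℝ) :=
      (mul_lt_mul_iff_right₀ hlm).mpr h'
    have h3 : l ^ m * l ^ (n + 1) * (Nat.factorial m : ℝ) < l ^ m * (Nat.factorial (m + n + 1) : ℝ) := by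
      nlinarith [h'']
    have hp : l ^ (m + n + 1) = l ^ m * l ^ (n + 1) := by
      rw [show m + n + 1 = m + (n + 1) by ring, pow_add]
    rw [hp]
    nlinarith [mul_lt_mul_of_pos_right h3 he, he]
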